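/- Let X be a smooth projective variety over an algebraically closed field of characteristic zero. The function D ↦ a(X,D) is continuous on the big cone Big^1(X) ⊂ NS(X,ℝ). -/

import Mathlib

/-!
An abstract framework for the Fujita invariant `a(X,L)`, the invariant `b(X,L)`,
and related notions from the theory of balanced line bundles
(Hassett–Tanimoto–Tschinkel, "Balanced line bundles and equivariant
compactifications of homogeneous spaces").

A `Variety` packages the data attached to a projective variety over an
algebraically closed field of characteristic zero that is needed to state the
results: the Néron–Severi space together with its pseudo-effective, big, nef and
ample cones, the canonical class, intersection-theoretic data, and the
qualitative geometric predicates occurring in the statements.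
-/

noncomputable section

structure Variety where
  /-- the set of closed points, with the Zariski topology -/
  Point : Type
  [topPoint : TopologicalSpace Point]
  /-- the Néron–Severi space `NS(X, ℝ)` -/
  NS : Type
  [addCommGroupNS : AddCommGroup NS]
  [moduleNS : Module ℝ NS]
  [finDimNS : FiniteDimensional ℝ NS]
  [topNS : TopologicalSpace NS]
  [topAddGroupNS : IsTopologicalAddGroup NS]
  [contSMulNS : ContinuousSMul ℝ NS]
  [t2NS : T2Space NS]
  /-- the pseudo-effective cone `Λ_eff(X)`: the closure of the cone of classes
  of effective ℝ-divisors -/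
  effCone : Set NS
  effCone_closed : IsClosed effCone
  effCone_convex : Convex ℝ effCone
  effCone_smul : ∀ c : ℝ, 0 ≤ c → ∀ v ∈ effCone, c • v ∈ effCone
  /-- the big cone `Big¹(X)`, the interior of the pseudo-effective cone -/
  bigCone : Set NS
  bigCone_eq : bigCone = interior effCone
  /-- the nef cone -/
  nefCone : Set NS
  /-- the ample cone -/
  ampleCone : Set NS
  /-- the canonical class `[K_X]` -/
  canonicalClass : NS
  /-- the dimension of `X` -/
  dim : ℕ
  /-- the top self-intersection number `D ↦ D^{dim X}` -/
  degree : NS → ℝ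
  /-- `D ↦ h⁰(X, D)` -/
  h0 : NS → ℕ
  /-- the Iitaka dimension of a divisor class -/
  iitakaDim : NS → ℤ
  /-- semiample divisor classes (some positive multiple is basepoint free) -/
  IsSemiample : NS → Prop
  /-- the augmented base locus `B₊(D)` -/
  augBaseLocus : NS → Set Point
  /-- numerical classes (as functionals on `NS`) of rational curves on `X`
  that deform to cover `X` -/
  movingRationalCurves : Set (NS →ₗ[ℝ] ℝ)
  /-- numerical classes of nef curves on `X` -/
  nefCurves : Set (NS →ₗ[ℝ] ℝ)
  /-- the group of ℝ-divisors on `X` (not modulo numerical equivalence) -/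
  Div : Type
  [addCommGroupDiv : AddCommGroup Div]
  [moduleDiv : Module ℝ Div]
  /-- the numerical class of a divisor -/
  cls : Div →ₗ[ℝ] NS
  /-- the effective divisors -/
  EffectiveDiv : Set Div
  /-- a canonical divisor `K_X` -/
  canonicalDiv : Div
  cls_canonicalDiv : cls canonicalDiv = canonicalClass
  /-- the pair `(X, Δ)` has terminal singularities -/
  PairTerminal : Div → Prop
  -- qualitative geometric predicates
  IsSmooth : Prop
  IsProjective : Prop
  IsUniruled : Prop
  IsNormal : Prop
  IsGorenstein : Prop
  IsRational : Prop
  IsRationallyConnected : Prop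
  /-- `X` is a generalized flag variety: a projective homogeneous space for a
  connected linear algebraic group -/
  IsFlagVariety : Prop
  /-- `X` is `ℚ`-factorial with terminal singularities -/
  IsQFactorialTerminal : Prop
  /-- `X` is birational to a log-Fano variety -/
  BirationalToLogFano : Prop
  /-- `X` has at worst canonical singularities -/
  HasCanonicalSingularities : Prop
  /-- classes numerically equivalent to an effective divisor which is
  exceptional for a birational map -/
  IsExceptionalClass : NS → Prop

attribute [instance] Variety.topPoint Variety.addCommGroupNS Variety.moduleNS
  Variety.finDimNS Variety.topNS Variety.topAddGroupNS Variety.contSMulNS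
  Variety.t2NS Variety.addCommGroupDiv Variety.moduleDiv

namespace Variety

variable (X : Variety)

def IsBig (D : X.NS) : Prop := D ∈ X.bigCone

def IsNef (D : X.NS) : Prop := D ∈ X.nefCone

def IsAmple (D : X.NS) : Prop := D ∈ X.ampleCone

def IsPseudoEffective (D : X.NS) : Prop := D ∈ X.effCone

/-- the Fujita invariant `a(X, L) = min { t ∈ ℝ | t[L] + [K_X] ∈ Λ_eff(X) }` -/
def fujita (D : X.NS) : ℝ :=
  sInf {t : ℝ | t • D + X.canonicalClass ∈ X.effCone}

/-- the adjoint class `a(X,L)·[L] + [K_X]` -/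
def adjoint (D : X.NS) : X.NS := X.fujita D • D + X.canonicalClass

/-- the minimal supported face of `Λ_eff(X)` containing `D`: the intersection
of all faces cut out by linear functionals that are non-negative on the
pseudo-effective cone and vanish at `D`. -/
def minimalFace (D : X.NS) : Set X.NS :=
  ⋂ σ ∈ {σ : X.NS →ₗ[ℝ] ℝ | (∀ v ∈ X.effCone, 0 ≤ σ v) ∧ σ D = 0},
    {v ∈ X.effCone | σ v = 0}

/-- the invariant `b(X, L)`: the codimension of the minimal supported face of
`Λ_eff(X)` containing the adjoint class `a(X,L)[L] + [K_X]`. -/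
def bConst (D : X.NS) : ℕ :=
  Module.finrank ℝ X.NS -
    Module.finrank ℝ (Submodule.span ℝ (X.minimalFace (X.adjoint D)))

/-- a class `D` is rigid if `h⁰(X, mD) = 1` for all sufficiently divisible `m` -/
def IsRigid (D : X.NS) : Prop :=
  ∃ m₀ : ℕ, 0 < m₀ ∧ ∀ m : ℕ, m₀ ∣ m → X.h0 ((m : ℝ) • D) = 1

end Variety

/-- An irreducible closed proper subvariety `Y ⊂ X`, together with the pullback
map of Néron–Severi spaces to (a resolution of singularities of) `Y`, through
which the invariants `a(Y, L)` and `b(Y, L)` are computed. -/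
structure Subvariety (X : Variety) where
  /-- (a resolution of singularities of) `Y` -/
  toVariety : Variety
  carrier : Set X.Point
  isClosed : IsClosed carrier
  isIrreducible : IsIrreducible carrier
  ne_univ : carrier ≠ Set.univ
  /-- the pullback of numerical classes from `X` to (a resolution of) `Y` -/
  restrict : X.NS →ₗ[ℝ] toVariety.NS
  /-- the `L`-degree `D ↦ D^{dim Y} · Y` -/
  degL : X.NS → ℝ

namespace Subvariety

variable {X : Variety} (Y : Subvariety X)

/-- `a(Y, L)`, computed on a resolution of `Y` -/
def fujita (D : X.NS) : ℝ := Y.toVariety.fujita (Y.restrict D)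

/-- `b(Y, L)`, computed on a resolution of `Y` -/
def bConst (D : X.NS) : ℕ := Y.toVariety.bConst (Y.restrict D)

/-- `L` is big on `Y` -/
def IsBigOn (D : X.NS) : Prop := Y.toVariety.IsBig (Y.restrict D)

end Subvariety

/-- A birational (contraction) map `φ : X ⇢ X'`, recorded through its
pushforward on Néron–Severi spaces. -/
structure BirationalContraction (X X' : Variety) where
  pushforward : X.NS →ₗ[ℝ] X'.NS

/-- A family of subvarieties of `X`: a family of effective cycles whose general
member is irreducible and reduced, over a base `W`. -/
structure FamilyOfSubvarieties (X : Variety) where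
  W : Type
  [topW : TopologicalSpace W]
  member : W → Subvariety X

attribute [instance] FamilyOfSubvarieties.topW

/-- the evaluation map of the family is dominant -/
def FamilyOfSubvarieties.IsDominant {X : Variety} (F : FamilyOfSubvarieties X) : Prop :=
  Dense (⋃ w : F.W, (F.member w).carrier)

namespace FujitaAux

open Filter Topology

variable (X : Variety)

/-- The defining set of the Fujita invariant. -/
def S (D : X.NS) : Set ℝ := {t : ℝ | t • D + X.canonicalClass ∈ X.effCone}

lemma fujita_eq (D : X.NS) : X.fujita D = sInf (S X D) := rfl

lemma eff_add {u v : X.NS} (hu : u ∈ X.effCone) (hv : v ∈ X.effCone) :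
    u + v ∈ X.effCone := by
  have h := X.effCone_convex hu hv (by norm_num : (0:ℝ) ≤ 1/2)
    (by norm_num : (0:ℝ) ≤ 1/2) (by norm_num)
  have h2 := X.effCone_smul 2 (by norm_num) _ h
  have : (2:ℝ) • ((1/2:ℝ) • u + (1/2:ℝ) • v) = u + v := by
    rw [smul_add, smul_smul, smul_smul]; norm_num
  rwa [this] at h2

lemma interior_add_mem {u c : X.NS} (hu : u ∈ interior X.effCone)
    (hc : c ∈ X.effCone) : u + c ∈ interior X.effCone := by
  rw [mem_interior_iff_mem_nhds]
  have hcont : Continuous (fun x : X.NS => x - c) := continuous_id.sub continuous_const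
  have hmem : (fun x : X.NS => x - c) ⁻¹' interior X.effCone ∈ 𝓝 (u + c) := by
    apply hcont.continuousAt.preimage_mem_nhds
    simpa using isOpen_interior.mem_nhds hu
  refine Filter.mem_of_superset hmem ?_
  intro x hx
  have hx' : x - c ∈ X.effCone := interior_subset hx
  have := eff_add X hx' hc
  simpa using this

lemma smul_interior_mem {ε : ℝ} (hε : 0 < ε) {D : X.NS}
    (hD : D ∈ interior X.effCone) : ε • D ∈ interior X.effCone := by
  rw [mem_interior_iff_mem_nhds]
  have hcont : Continuous (fun x : X.NS => ε⁻¹ • x) := continuous_const.smul continuous_id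
  have hmem : (fun x : X.NS => ε⁻¹ • x) ⁻¹' interior X.effCone ∈ 𝓝 (ε • D) := by
    apply hcont.continuousAt.preimage_mem_nhds
    have : ε⁻¹ • ε • D = D := by rw [smul_smul, inv_mul_cancel₀ hε.ne', one_smul]
    simpa [this] using isOpen_interior.mem_nhds hD
  refine Filter.mem_of_superset hmem ?_
  intro x hx
  have hx' : ε⁻¹ • x ∈ X.effCone := interior_subset hx
  have := X.effCone_smul ε hε.le _ hx'
  rwa [smul_smul, mul_inv_cancel₀ hε.ne', one_smul] at this

lemma eff_univ_of_neg_mem {D : X.NS} (hD : D ∈ interior X.effCone)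
    (hneg : -D ∈ X.effCone) : X.effCone = Set.univ := by
  have h0 : (0 : X.NS) ∈ interior X.effCone := by
    have := interior_add_mem X hD hneg
    simpa using this
  ext v
  simp only [Set.mem_univ, iff_true]
  have hcont : Continuous (fun s : ℝ => s • v) := continuous_id.smul continuous_const
  have hev : ∀ᶠ s in 𝓝 (0:ℝ), s • v ∈ interior X.effCone := by
    have : (fun s : ℝ => s • v) ⁻¹' interior X.effCone ∈ 𝓝 (0:ℝ) := by
      apply hcont.continuousAt.preimage_mem_nhds
      simpa using isOpen_interior.mem_nhds h0
    exact this
  have hev' : ∀ᶠ s in 𝓝[>] (0:ℝ), s • v ∈ interior X.effCone :=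
    hev.filter_mono nhdsWithin_le_nhds
  obtain ⟨s, hs, hsv⟩ := (hev'.and self_mem_nhdsWithin).exists
  have : s⁻¹ • (s • v) ∈ X.effCone :=
    X.effCone_smul s⁻¹ (inv_nonneg.2 (le_of_lt hsv)) _ (interior_subset hs)
  rwa [smul_smul, inv_mul_cancel₀ (ne_of_gt hsv), one_smul] at this

lemma S_closed (D : X.NS) : IsClosed (S X D) := by
  have hcont : Continuous (fun t : ℝ => t • D + X.canonicalClass) :=
    (continuous_id.smul continuous_const).add continuous_const
  exact X.effCone_closed.preimage hcont

lemma S_nonempty {D : X.NS} (hD : D ∈ interior X.effCone) : (S X D).Nonempty := by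
  have hcont : Continuous (fun s : ℝ => D + s • X.canonicalClass) :=
    continuous_const.add (continuous_id.smul continuous_const)
  have hev : ∀ᶠ s in 𝓝 (0:ℝ), D + s • X.canonicalClass ∈ interior X.effCone := by
    have : (fun s : ℝ => D + s • X.canonicalClass) ⁻¹' interior X.effCone ∈ 𝓝 (0:ℝ) := by
      apply hcont.continuousAt.preimage_mem_nhds
      simpa using isOpen_interior.mem_nhds hD
    exact this
  have hev' : ∀ᶠ s in 𝓝[>] (0:ℝ), D + s • X.canonicalClass ∈ interior X.effCone :=
    hev.filter_mono nhdsWithin_le_nhds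
  obtain ⟨s, hs, hspos⟩ := (hev'.and self_mem_nhdsWithin).exists
  refine ⟨s⁻¹, ?_⟩
  have : s⁻¹ • (D + s • X.canonicalClass) ∈ X.effCone :=
    X.effCone_smul s⁻¹ (inv_nonneg.2 hspos.le) _ (interior_subset hs)
  rwa [smul_add, smul_smul, inv_mul_cancel₀ (ne_of_gt hspos), one_smul] at this

lemma S_upward {D : X.NS} (hD : D ∈ interior X.effCone) {t t' : ℝ}
    (ht : t ∈ S X D) (h : t ≤ t') : t' ∈ S X D := by
  have h1 : (t' - t) • D ∈ X.effCone :=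
    X.effCone_smul _ (sub_nonneg.2 h) _ (interior_subset hD)
  have h2 := eff_add X ht h1
  have : t • D + X.canonicalClass + (t' - t) • D = t' • D + X.canonicalClass := by
    rw [sub_smul]; abel
  rwa [this] at h2

lemma S_bddBelow (huniv : X.effCone ≠ Set.univ) {D : X.NS}
    (hD : D ∈ interior X.effCone) : BddBelow (S X D) := by
  by_contra hbdd
  have hneg : -D ∈ X.effCone := by
    have hex : ∀ n : ℕ, ∃ t ∈ S X D, t < -(n + 1 : ℝ) := by
      intro n
      rcases not_bddBelow_iff.1 hbdd (-(n+1:ℝ)) with ⟨t, ht, hlt⟩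
      exact ⟨t, ht, hlt⟩
    choose t ht hlt using hex
    have htneg : ∀ n, (0:ℝ) < -(t n) := fun n => by
      have : (0:ℝ) < (n:ℝ) + 1 := by positivity
      linarith [hlt n]
    set x : ℕ → X.NS := fun n => -D + (-(t n))⁻¹ • X.canonicalClass with hx
    have hxC : ∀ n, x n ∈ X.effCone := by
      intro n
      have := X.effCone_smul (-(t n))⁻¹ (inv_nonneg.2 (htneg n).le) _ (ht n)
      have heq : (-(t n))⁻¹ • (t n • D + X.canonicalClass) = x n := by
        rw [hx, smul_add, smul_smul]
        congr 1
        have htne : t n ≠ 0 := ne_of_lt (by linarith [htneg n])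
        rw [inv_neg, neg_mul, inv_mul_cancel₀ htne]
        module
      rwa [heq] at this
    have hlim : Tendsto (fun n : ℕ => (-(t n))⁻¹) atTop (𝓝 0) := by
      apply squeeze_zero (fun n => (inv_nonneg.2 (htneg n).le))
        (fun n => ?_) tendsto_one_div_add_atTop_nhds_zero_nat
      rw [one_div]
      apply inv_anti₀ (by positivity)
      linarith [hlt n]
    have hlimx : Tendsto x atTop (𝓝 (-D)) := by
      have : Tendsto (fun n : ℕ => (-(t n))⁻¹ • X.canonicalClass) atTop (𝓝 ((0:ℝ) • X.canonicalClass)) :=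
        hlim.smul tendsto_const_nhds
      rw [zero_smul] at this
      have h2 := (tendsto_const_nhds (x := -D) (f := atTop (α := ℕ))).add this
      simpa [hx] using h2
    exact X.effCone_closed.mem_of_tendsto hlimx (Filter.Eventually.of_forall hxC)
  exact huniv (eff_univ_of_neg_mem X hD hneg)

end FujitaAux

/-- Let `X` be a smooth projective variety over an
algebraically closed field of characteristic zero.  The Fujita invariant
`D ↦ a(X, D)` is continuous on the big cone `Big¹(X) ⊂ NS(X, ℝ)`. -/
theorem fujita_continuousOn_bigCone
    (X : Variety) (hsmooth : X.IsSmooth) (hproj : X.IsProjective) :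
    ContinuousOn X.fujita X.bigCone := by
  classical
  open Filter Topology FujitaAux in
  by_cases huniv : X.effCone = Set.univ
  · have hconst : X.fujita = fun _ => sInf Set.univ := by
      funext D
      rw [fujita_eq]
      congr 1
      simp [S, huniv]
    rw [hconst]
    exact continuousOn_const
  · intro D0 hD0
    have hbig : X.bigCone = interior X.effCone := X.bigCone_eq
    have hD0' : D0 ∈ interior X.effCone := hbig ▸ hD0
    have hopen : IsOpen X.bigCone := hbig ▸ isOpen_interior
    have ha0mem : X.fujita D0 ∈ S X D0 :=
      (S_closed X D0).csInf_mem (S_nonempty X hD0') (S_bddBelow X huniv hD0')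
    set a0 := X.fujita D0 with ha0
    rw [ContinuousWithinAt]
    rw [tendsto_order]
    constructor
    · -- lower semicontinuity: b < a0 → eventually b < fujita D
      intro b hb
      set b' := (b + a0) / 2 with hb'
      have hbb' : b < b' := by rw [hb']; linarith
      have hb'a0 : b' < a0 := by rw [hb']; linarith
      have hb'not : b' ∉ S X D0 := by
        intro hmem
        have := csInf_le (S_bddBelow X huniv hD0') hmem
        rw [← fujita_eq] at this
        exact absurd this (not_le.2 hb'a0)
      have hcont : Continuous (fun D : X.NS => b' • D + X.canonicalClass) :=
        (continuous_const.smul continuous_id).add continuous_const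
      have hev1 : ∀ᶠ D in 𝓝 D0, b' • D + X.canonicalClass ∉ X.effCone := by
        have : (fun D : X.NS => b' • D + X.canonicalClass) ⁻¹' X.effConeᶜ ∈ 𝓝 D0 := by
          apply hcont.continuousAt.preimage_mem_nhds
          exact X.effCone_closed.isOpen_compl.mem_nhds hb'not
        exact this
      have hev2 : ∀ᶠ D in 𝓝 D0, D ∈ interior X.effCone :=
        isOpen_interior.mem_nhds hD0'
      have := (hev1.and hev2).filter_mono (nhdsWithin_le_nhds (s := X.bigCone))
      refine this.mono ?_
      rintro D ⟨hnot, hint⟩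
      have hle : b' ≤ sInf (S X D) := by
        apply le_csInf (S_nonempty X hint)
        intro t htmem
        by_contra hlt
        exact hnot (S_upward X hint htmem (le_of_not_ge hlt))
      calc b < b' := hbb'
        _ ≤ X.fujita D := by rw [fujita_eq]; exact hle
    · -- upper semicontinuity: a0 < b → eventually fujita D < b
      intro b hb
      set b' := (a0 + b) / 2 with hb'
      have ha0b' : a0 < b' := by rw [hb']; linarith
      have hb'b : b' < b := by rw [hb']; linarith
      have hint : b' • D0 + X.canonicalClass ∈ interior X.effCone := by
        have h1 : (b' - a0) • D0 ∈ interior X.effCone :=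
          smul_interior_mem X (by linarith) hD0'
        have h2 := interior_add_mem X h1 ha0mem
        have heq : (b' - a0) • D0 + (a0 • D0 + X.canonicalClass)
            = b' • D0 + X.canonicalClass := by
          rw [sub_smul]; abel
        rwa [heq] at h2
      have hcont : Continuous (fun D : X.NS => b' • D + X.canonicalClass) :=
        (continuous_const.smul continuous_id).add continuous_const
      have hev1 : ∀ᶠ D in 𝓝 D0, b' • D + X.canonicalClass ∈ interior X.effCone := by
        have : (fun D : X.NS => b' • D + X.canonicalClass) ⁻¹' interior X.effCone ∈ 𝓝 D0 := by
          apply hcont.continuousAt.preimage_mem_nhds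
          exact isOpen_interior.mem_nhds hint
        exact this
      have hev2 : ∀ᶠ D in 𝓝 D0, D ∈ interior X.effCone :=
        isOpen_interior.mem_nhds hD0'
      have := (hev1.and hev2).filter_mono (nhdsWithin_le_nhds (s := X.bigCone))
      refine this.mono ?_
      rintro D ⟨hmem, hintD⟩
      have hb'S : b' ∈ S X D := show b' • D + X.canonicalClass ∈ X.effCone from interior_subset hmem
      have : X.fujita D ≤ b' := by
        rw [fujita_eq]
        exact csInf_le (S_bddBelow X huniv hintD) hb'S
      linarith
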